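/- Let (K,v) be a valued field whose residue field is k. If K is C_i and v is henselian, then k is C_i. -/

import Mathlib

open MvPolynomial

lemma eval_mul_pow_of_isHomogeneous {R : Type*} [CommRing R] {σ : Type*} [Fintype σ]
    {f : MvPolynomial σ R} {d : ℕ} (hf : f.IsHomogeneous d) (c : R) (x : σ → R) :
    MvPolynomial.eval (fun i => c * x i) f = c ^ d * MvPolynomial.eval x f := by
  rw [MvPolynomial.eval_eq', MvPolynomial.eval_eq', Finset.mul_sum]
  apply Finset.sum_congr rfl
  intro m hm
  have hdeg : ∑ i, m i = d := by
    have h := hf (MvPolynomial.mem_support_iff.mp hm)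
    rw [show Finsupp.weight (1 : σ → ℕ) = Finsupp.weight (fun _ ↦ 1) from rfl,
      ← Finsupp.degree_eq_weight_one, Finsupp.degree] at h
    rw [← h]
    exact (Finset.sum_subset (Finset.subset_univ m.support) (fun i _ hi => by
      simpa using Finsupp.notMem_support_iff.mp hi)).symm
  calc MvPolynomial.coeff m f * ∏ i, (c * x i) ^ m i
      = MvPolynomial.coeff m f * ((∏ i, c ^ m i) * ∏ i, x i ^ m i) := by
        rw [← Finset.prod_mul_distrib]; simp [mul_pow]
    _ = c ^ d * (MvPolynomial.coeff m f * ∏ i, x i ^ m i) := by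
        rw [Finset.prod_pow_eq_pow_sum, hdeg]; ring

/-- A field `k` is `C_i` if every homogeneous polynomial of degree `d ≥ 1` in `n + 1`
variables with `d ^ i ≤ n` has a non-trivial zero over `k`. -/
def IsCi (k : Type*) [Field k] (i : ℕ) : Prop :=
  ∀ (n d : ℕ), 0 < d → d ^ i ≤ n →
    ∀ f : MvPolynomial (Fin (n + 1)) k, f.IsHomogeneous d →
      ∃ x : Fin (n + 1) → k, x ≠ 0 ∧ MvPolynomial.eval x f = 0

set_option maxHeartbeats 1000000 in
set_option synthInstance.maxHeartbeats 1000000 in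
/-- If `(K, v)` is a henselian valued field and `K` is `C_i`, then the residue field of the
valuation ring of `v` is `C_i`. -/
theorem isCi_residueField_of_henselian
    (K : Type*) [Field K] (Γ : Type*) [LinearOrderedCommGroupWithZero Γ]
    (v : Valuation K Γ) (i : ℕ)
    (hK : IsCi K i) (hhens : HenselianLocalRing v.valuationSubring) :
    IsCi (IsLocalRing.ResidueField v.valuationSubring) i := by
  intro n d hd hdi f hf
  let O := v.valuationSubring
  let res := IsLocalRing.residue O
  -- lift coefficients
  have hres : Function.Surjective res := IsLocalRing.residue_surjective
  choose lift hlift using hres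
  set g : MvPolynomial (Fin (n + 1)) O :=
    ∑ m ∈ f.support, MvPolynomial.monomial m (lift (f.coeff m)) with hg
  have hmapg : MvPolynomial.map res g = f := by
    rw [hg, map_sum]
    conv_rhs => rw [f.as_sum]
    exact Finset.sum_congr rfl fun m hm => by rw [MvPolynomial.map_monomial, hlift]
  have hghom : g.IsHomogeneous d := by
    apply MvPolynomial.IsHomogeneous.sum
    intro m hm
    refine MvPolynomial.isHomogeneous_monomial _ ?_
    rw [Finsupp.degree_eq_weight_one]
    exact hf (MvPolynomial.mem_support_iff.mp hm)
  set F : MvPolynomial (Fin (n + 1)) K := MvPolynomial.map (algebraMap O K) g with hF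
  have hFhom : F.IsHomogeneous d := hghom.map _
  obtain ⟨x, hx0, hxF⟩ := hK n d hd hdi F hFhom
  -- pick coordinate with max valuation
  obtain ⟨j, -, hj⟩ := Finset.exists_max_image Finset.univ (fun i => v (x i))
    ⟨0, Finset.mem_univ 0⟩
  have hxj : x j ≠ 0 := by
    obtain ⟨i0, hi0⟩ := Function.ne_iff.mp hx0
    intro h
    have := hj i0 (Finset.mem_univ i0)
    rw [h, map_zero, le_zero_iff, map_eq_zero] at this
    exact hi0 this
  have hmem : ∀ t : Fin (n + 1), x t / x j ∈ O := by
    intro t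
    rw [Valuation.mem_valuationSubring_iff, map_div₀]
    exact div_le_one_of_le₀ (hj t (Finset.mem_univ t)) zero_le'
  set z : Fin (n + 1) → O := fun t => ⟨x t / x j, hmem t⟩ with hz
  have hevalz : MvPolynomial.eval z g = 0 := by
    have key : (algebraMap O K) (MvPolynomial.eval z g) = 0 := by
      have h1 : (algebraMap O K) (MvPolynomial.eval z g)
          = MvPolynomial.eval (fun t => x t / x j) F := by
        rw [MvPolynomial.eval, MvPolynomial.coe_eval₂Hom,
          MvPolynomial.eval₂_comp_left (algebraMap O K) (RingHom.id O) z g, hF,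
          MvPolynomial.eval_map]
        rfl
      have h2 : MvPolynomial.eval (fun t => x t / x j) F = 0 := by
        have := eval_mul_pow_of_isHomogeneous hFhom (x j)⁻¹ x
        simp only [div_eq_inv_mul] at h1 ⊢
        rw [this, hxF, mul_zero]
      rw [h1, h2]
    exact Subtype.ext (by simpa using key)
  refine ⟨res ∘ z, ?_, ?_⟩
  · intro h
    have : res (z j) = 0 := congrFun h j
    have hzj : z j = 1 := Subtype.ext (div_self hxj)
    rw [hzj, map_one] at this
    exact one_ne_zero this
  · calc MvPolynomial.eval (res ∘ z) f = MvPolynomial.eval (res ∘ z) (MvPolynomial.map res g) := by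
          rw [hmapg]
    _ = res (MvPolynomial.eval z g) := by
          rw [MvPolynomial.eval_map, MvPolynomial.eval, MvPolynomial.coe_eval₂Hom,
            MvPolynomial.eval₂_comp_left res (RingHom.id O) z g]
          rfl
    _ = 0 := by rw [hevalz, map_zero]
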